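/- arXiv:1511.06023 — 4 statements merged into one kernel-verified Lean document; each statement's English description precedes it below -/
import Mathlib

section
/- If T is a finite tree of order n that has exactly n_2 vertices of degree 2, then b(T) ≤ ⌈√((n + n_2) + 1/4) + 1/2⌉. -/
/-- `ball G u k` is `N^k[u]`: the set of vertices `v` reachable from `u`
with `dist_G(u,v) ≤ k`. -/
def ball {V : Type*} (G : SimpleGraph V) (u : V) (k : ℕ) : Set V :=
  {v | G.Reachable u v ∧ G.dist u v ≤ k}

/-- The burning number of `G`: the minimum length `k` of a sequence
`(x_1, …, x_k)` of vertices with `V(G) = N^{k-1}[x_1] ∪ ⋯ ∪ N^0[x_k]`. -/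
noncomputable def burningNumber {V : Type*} (G : SimpleGraph V) : ℕ :=
  sInf {k | ∃ x : Fin k → V, ∀ v : V, ∃ i : Fin k, v ∈ ball G (x i) (k - 1 - (i : ℕ))}

open SimpleGraph Set Walk

namespace BurnAux

universe u
variable {V : Type u} {G : SimpleGraph V}

lemma support_drop {u v : V} (p : G.Walk u v) (n : ℕ) (hn : n ≤ p.length) :
    (p.drop n).support = p.support.drop n := by
  induction p generalizing n with
  | nil =>
      simp only [Walk.length_nil, Nat.le_zero] at hn
      subst hn; simp [Walk.drop]
  | cons h q ih =>
      match n with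
      | 0 => simp [Walk.drop]
      | (m+1) =>
          have : m ≤ q.length := by simpa using hn
          simp [Walk.drop, ih m this]

lemma length_drop {u v : V} (p : G.Walk u v) (n : ℕ) (hn : n ≤ p.length) :
    (p.drop n).length = p.length - n := by
  have h1 := congrArg List.length (support_drop p n hn)
  rw [Walk.length_support, List.length_drop, Walk.length_support] at h1
  omega

lemma getVert_drop {u v : V} (p : G.Walk u v) (n m : ℕ) :
    (p.drop n).getVert m = p.getVert (n + m) := by
  induction p generalizing n with
  | nil => simp [Walk.drop, Walk.getVert_of_length_le]
  | cons h q ih =>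
      match n with
      | 0 => simp [Walk.drop]
      | (k+1) =>
          simp only [Walk.drop, Walk.getVert_copy, ih k]
          refine (ih k).trans ?_
          rw [Walk.getVert_cons _ _ (by omega)]
          congr 1
          omega

lemma IsPath.concat' {u v w : V} {p : G.Walk u v} (hp : p.IsPath) (h : G.Adj v w)
    (hw : w ∉ p.support) : (p.concat h).IsPath := by
  rw [Walk.isPath_def] at hp ⊢
  rw [Walk.support_concat]
  simpa [List.concat_eq_append, List.nodup_append] using ⟨hp, fun a ha h => hw (h ▸ ha)⟩

section Tree
variable {T : SimpleGraph V}

noncomputable def tpath (hT : T.IsTree) (u v : V) : T.Walk u v :=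
  (hT.existsUnique_path u v).exists.choose

lemma tpath_isPath (hT : T.IsTree) (u v : V) : (tpath hT u v).IsPath :=
  (hT.existsUnique_path u v).exists.choose_spec

lemma tpath_eq (hT : T.IsTree) {u v : V} {p : T.Walk u v} (hp : p.IsPath) :
    p = tpath hT u v :=
  (hT.existsUnique_path u v).unique hp (tpath_isPath hT u v)

lemma length_tpath (hT : T.IsTree) (u v : V) : (tpath hT u v).length = T.dist u v := by
  obtain ⟨p, hp, hl⟩ := hT.isConnected.exists_path_of_dist u v
  rw [← hl, tpath_eq hT hp]

lemma tpath_nil (hT : T.IsTree) (u : V) : tpath hT u u = Walk.nil :=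
  (tpath_eq hT (Walk.IsPath.nil)).symm

lemma takeUntil_tpath (hT : T.IsTree) [DecidableEq V] {u v w : V}
    (hw : w ∈ (tpath hT u v).support) :
    (tpath hT u v).takeUntil w hw = tpath hT u w :=
  tpath_eq hT ((tpath_isPath hT u v).takeUntil hw)

lemma reverse_tpath (hT : T.IsTree) (u v : V) :
    (tpath hT u v).reverse = tpath hT v u :=
  tpath_eq hT ((tpath_isPath hT u v).reverse)

end Tree

def liftWalk {S : Set V} :
    ∀ {a b : V} (p : G.Walk a b) (h : ∀ z ∈ p.support, z ∈ S),
      (G.induce S).Walk ⟨a, h a p.start_mem_support⟩ ⟨b, h b p.end_mem_support⟩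
  | _, _, Walk.nil, _ => Walk.nil
  | _, _, Walk.cons hadj q, h =>
      Walk.cons (by exact hadj) (liftWalk q (fun z hz => h z (by simp [hz])))

lemma dist_induce_le {S : Set V} {a b : ↥S} (h : (G.induce S).Reachable a b) :
    G.dist ↑a ↑b ≤ (G.induce S).dist a b := by
  obtain ⟨p, hp, hl⟩ := h.exists_path_of_dist
  calc G.dist ↑a ↑b ≤ (p.map (SimpleGraph.Embedding.induce S).toHom).length :=
        SimpleGraph.dist_le _
    _ = (G.induce S).dist a b := by rw [Walk.length_map, hl]

lemma isAcyclic_induce {S : Set V} (hG : G.IsAcyclic) : (G.induce S).IsAcyclic :=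
  fun _ c hc => hG _
    (Walk.IsCycle.map (f := (SimpleGraph.Embedding.induce (G := G) S).toHom)
      (SimpleGraph.Embedding.induce (G := G) S).injective hc)

theorem key : ∀ (N : ℕ) {V : Type u} [Fintype V] (T : SimpleGraph V), T.IsTree → ∀ (k : ℕ),
    Fintype.card V ≤ N →
    Fintype.card V + {v : V | (T.neighborSet v).ncard = 2}.ncard ≤ k * (k - 1) →
    ∃ x : Fin k → V, ∀ v : V, ∃ i : Fin k, v ∈ _root_.ball T (x i) (k - 1 - (i : ℕ)) := by
  intro N
  induction N with
  | zero =>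
      intro V _ T hT k hN _
      have : Nonempty V := hT.isConnected.nonempty
      have := Fintype.card_pos (α := V)
      omega
  | succ N ih =>
      intro V _ T hT k hcard hcount
      classical
      have hconn := hT.isConnected
      have hne : Nonempty V := hconn.nonempty
      have hn1 : 1 ≤ Fintype.card V := Fintype.card_pos
      have hk2 : 2 ≤ k := by
        rcases k with _ | _ | k
        · simpa using hcount
        · simpa using hcount
        · omega
      have r : V := hne.some
      obtain ⟨ℓ, hℓ⟩ := Finite.exists_max (fun v => T.dist r v)
      set d := T.dist r ℓ with hd
      by_cases hcase : d ≤ k - 1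
      · refine ⟨fun _ => r, fun v => ⟨⟨0, by omega⟩, hconn.preconnected r v, ?_⟩⟩
        simpa using le_trans (le_trans (hℓ v) hcase) (by omega)
      · -- main case: the deepest leaf is at distance ≥ k
        have hdk : k ≤ d := by omega
        set Q : T.Walk ℓ r := tpath hT ℓ r with hQdef
        have hQp : Q.IsPath := tpath_isPath hT ℓ r
        have hQlen : Q.length = d := by
          rw [hQdef, length_tpath, SimpleGraph.dist_comm]
        set vtx : ℕ → V := fun i => Q.getVert i with hvtx
        have hdropPath : ∀ i, i ≤ d → (Q.drop i).IsPath := by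
          intro i hi
          rw [Walk.isPath_def, support_drop _ _ (by omega)]
          exact ((Walk.isPath_def _).mp hQp).sublist (List.drop_sublist _ _)
        have hdropEq : ∀ i, i ≤ d → (Q.drop i) = tpath hT (vtx i) r := fun i hi =>
          tpath_eq hT (hdropPath i hi)
        have hdistvr : ∀ i, i ≤ d → T.dist (vtx i) r = d - i := by
          intro i hi
          rw [← length_tpath hT, ← hdropEq i hi, length_drop _ _ (by omega), hQlen]
        have hdistrv : ∀ i, i ≤ d → T.dist r (vtx i) = d - i := by
          intro i hi; rw [SimpleGraph.dist_comm]; exact hdistvr i hi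
        have hvinj : ∀ i j, i ≤ d → j ≤ d → vtx i = vtx j → i = j := by
          intro i j hi hj hij
          have h1 := hdistvr i hi
          rw [hij, hdistvr j hj] at h1; omega
        have hvmem : ∀ i, i ≤ d → vtx i ∈ Q.support :=
          fun i hi => Walk.mem_support_iff_exists_getVert.mpr ⟨i, rfl, by omega⟩
        set x := vtx (k-1) with hx
        have hxdrop : ∀ i, i ≤ k-1 → x ∈ (Q.drop i).support := by
          intro i hi
          refine Walk.mem_support_iff_exists_getVert.mpr ⟨k-1-i, ?_, ?_⟩
          · rw [getVert_drop, hx, hvtx]; congr 1; omega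
          · rw [length_drop _ _ (by omega), hQlen]; omega
        set D : Set V := {v | x ∈ (tpath hT r v).support} with hD
        have hPrv : ∀ i, i ≤ d → tpath hT r (vtx i) = (Q.drop i).reverse := by
          intro i hi
          rw [← reverse_tpath hT (vtx i) r, ← hdropEq i hi]
        have hvD : ∀ i, i ≤ k-1 → vtx i ∈ D := by
          intro i hi
          show x ∈ (tpath hT r (vtx i)).support
          rw [hPrv i (by omega), Walk.support_reverse, List.mem_reverse]
          exact hxdrop i hi
        have hxD : x ∈ D := hvD (k-1) le_rfl
        have hxr : x ≠ r := by
          intro h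
          have h2 := hdistrv (k-1) (by omega)
          rw [← hx, h, SimpleGraph.dist_self] at h2; omega
        have hrD : r ∉ D := by
          intro h
          rw [hD, mem_setOf_eq, tpath_nil hT r] at h
          simp only [Walk.support_nil, List.mem_singleton] at h
          exact hxr h
        have hmono : ∀ w, ∀ z ∈ (tpath hT r w).support, z ∈ D → w ∈ D := by
          intro w z hz hzD
          have heq : tpath hT r z = (tpath hT r w).takeUntil z hz := (takeUntil_tpath hT hz).symm
          show x ∈ (tpath hT r w).support
          have hxz : x ∈ (tpath hT r z).support := hzD
          rw [heq] at hxz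
          exact Walk.support_takeUntil_subset _ hz hxz
        have hcross : ∀ u w, u ∈ D → w ∉ D → T.Adj u w → u = x := by
          intro u w hu hw hadj
          by_cases hmem : w ∈ (tpath hT r u).support
          · have htake : tpath hT r w = (tpath hT r u).takeUntil w hmem :=
              (takeUntil_tpath hT hmem).symm
            have huns : u ∉ (tpath hT r w).support := by
              intro hu2
              have hnodup := (Walk.isPath_def _).mp (tpath_isPath hT r u)
              conv at hnodup => rw [← (tpath hT r u).take_spec hmem]
              rw [Walk.support_append] at hnodup
              have hdisj := List.disjoint_of_nodup_append hnodup
              have h1 : u ∈ ((tpath hT r u).takeUntil w hmem).support := by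
                rw [← htake]; exact hu2
              have h2 : u ∈ ((tpath hT r u).dropUntil w hmem).support.tail := by
                have hend : u ∈ ((tpath hT r u).dropUntil w hmem).support :=
                  Walk.end_mem_support _
                rw [Walk.support_eq_cons] at hend
                rcases List.mem_cons.mp hend with h | h
                · exact absurd h hadj.ne
                · exact h
              exact hdisj h1 h2
            have hcon : ((tpath hT r w).concat hadj.symm).IsPath :=
              IsPath.concat' (tpath_isPath hT r w) hadj.symm huns
            have hequ : (tpath hT r w).concat hadj.symm = tpath hT r u := tpath_eq hT hcon
            have hxu : x ∈ ((tpath hT r w).concat hadj.symm).support := by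
              rw [hequ]; exact hu
            rw [Walk.support_concat, List.mem_append] at hxu
            rcases hxu with h | h
            · exact absurd h hw
            · simp only [List.mem_singleton] at h; exact h.symm
          · exfalso
            have hcon : ((tpath hT r u).concat hadj).IsPath :=
              IsPath.concat' (tpath_isPath hT r u) hadj hmem
            have hequ : (tpath hT r u).concat hadj = tpath hT r w := tpath_eq hT hcon
            apply hw
            show x ∈ (tpath hT r w).support
            rw [← hequ, Walk.support_concat, List.mem_append]
            exact Or.inl hu
        have hsupp_sub : ∀ i, i ≤ d → (tpath hT r (vtx i)).support ⊆ Q.support := by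
          intro i hi z hz
          rw [hPrv i hi, Walk.support_reverse, List.mem_reverse,
            support_drop _ _ (by omega)] at hz
          exact List.mem_of_mem_drop hz
        have hadjvtx : ∀ i, i < d → T.Adj (vtx i) (vtx (i+1)) := by
          intro i hi
          exact Q.adj_getVert_succ (by omega)
        have hdist_adj : ∀ (a b : V), T.Adj a b → T.dist a b ≤ 1 := by
          intro a b hab
          simpa using SimpleGraph.dist_le (Walk.cons hab Walk.nil)
        have htri : ∀ a b c : V, T.dist a c ≤ T.dist a b + T.dist b c :=
          fun a b c => hconn.dist_triangle
        have hnbr : ∀ i z, 1 ≤ i → i ≤ k-1 → z ∈ Q.support → T.Adj (vtx i) z →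
            z = vtx (i-1) ∨ z = vtx (i+1) := by
          intro i z h1 h2 hz hadj
          obtain ⟨j, hj, hjle⟩ := Walk.mem_support_iff_exists_getVert.mp hz
          have hjd : j ≤ d := by omega
          subst hj
          have hij : i ≠ j := by
            rintro rfl
            exact hadj.ne rfl
          have e1 := hdistrv i (by omega)
          have e2 := hdistrv j hjd
          have t1 := htri r (vtx j) (vtx i)
          have t2 := htri r (vtx i) (vtx j)
          have ha1 : T.dist (vtx i) (vtx j) ≤ 1 := hdist_adj _ _ hadj
          have ha2 : T.dist (vtx j) (vtx i) ≤ 1 := hdist_adj _ _ hadj.symm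
          have e3 := hdistrv i (by omega : i ≤ d)
          have hj' : j = i - 1 ∨ j = i + 1 := by omega
          rcases hj' with rfl | rfl
          · exact Or.inl rfl
          · exact Or.inr rfl
        have hwD : ∀ i w, i ≤ k-1 → T.Adj (vtx i) w → w ∉ Q.support → w ∈ D := by
          intro i w hi hadj hw
          have hns : w ∉ (tpath hT r (vtx i)).support := fun h => hw (hsupp_sub i (by omega) h)
          have hcon : ((tpath hT r (vtx i)).concat hadj).IsPath :=
            IsPath.concat' (tpath_isPath hT r (vtx i)) hadj hns
          have hequ : (tpath hT r (vtx i)).concat hadj = tpath hT r w := tpath_eq hT hcon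
          show x ∈ (tpath hT r w).support
          rw [← hequ, Walk.support_concat, List.mem_append]
          exact Or.inl (hvD i hi)
        have hextra : ∀ i, 1 ≤ i → i ≤ k-1 → (T.neighborSet (vtx i)).ncard ≠ 2 →
            ∃ w, T.Adj (vtx i) w ∧ w ∉ Q.support ∧ w ∈ D := by
          intro i h1 h2 hdeg
          by_contra hno
          push_neg at hno
          apply hdeg
          have hne12 : vtx (i-1) ≠ vtx (i+1) := by
            intro h
            have := hvinj (i-1) (i+1) (by omega) (by omega) h
            omega
          have hsub : T.neighborSet (vtx i) ⊆ {vtx (i-1), vtx (i+1)} := by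
            intro w hw
            have hadj : T.Adj (vtx i) w := hw
            by_cases hQs : w ∈ Q.support
            · rcases hnbr i w h1 h2 hQs hadj with h | h <;> simp [h]
            · exact absurd (hwD i w (by omega) hadj hQs) (hno w hadj hQs)
          have hsup : ({vtx (i-1), vtx (i+1)} : Set V) ⊆ T.neighborSet (vtx i) := by
            intro w hw
            rcases hw with h | h
            · subst h
              have := hadjvtx (i-1) (by omega)
              have hi1 : i - 1 + 1 = i := by omega
              rw [hi1] at this
              exact this.symm
            · simp only [mem_singleton_iff] at h
              subst h
              exact hadjvtx i (by omega)
          have h1le : (T.neighborSet (vtx i)).ncard ≤ 2 := by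
            have := Set.ncard_le_ncard hsub (Set.toFinite _)
            rwa [Set.ncard_pair hne12] at this
          have h2le : 2 ≤ (T.neighborSet (vtx i)).ncard := by
            have := Set.ncard_le_ncard hsup (Set.toFinite _)
            rwa [Set.ncard_pair hne12] at this
          omega
        have hwdist : ∀ i j w, 1 ≤ i → i < j → j ≤ k-1 → w ∉ Q.support →
            T.Adj (vtx i) w → T.Adj (vtx j) w → False := by
          intro i j w h1 hij h2 hwQ ha1 ha2
          have hid : i ≤ d := by omega
          have hjd : j ≤ d := by omega
          have hd2 : T.dist (vtx i) (vtx j) ≤ 2 := by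
            simpa using SimpleGraph.dist_le (Walk.cons ha1 (Walk.cons ha2.symm Walk.nil))
          have hd2' : T.dist (vtx j) (vtx i) ≤ 2 := by
            simpa using SimpleGraph.dist_le (Walk.cons ha2 (Walk.cons ha1.symm Walk.nil))
          have hdge := htri r (vtx j) (vtx i)
          have e1 := hdistrv i hid
          have e2 := hdistrv j hjd
          have hwvi : w ≠ vtx i := fun h => hwQ (h ▸ hvmem i hid)
          have hwvj : w ≠ vtx j := fun h => hwQ (h ▸ hvmem j hjd)
          have hj2 : j = i + 1 ∨ j = i + 2 := by omega
          have hvne : ∀ a b, a ≤ d → b ≤ d → a ≠ b → vtx a ≠ vtx b := by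
            intro a b ha hb hab h
            exact hab (hvinj a b ha hb h)
          rcases hj2 with rfl | rfl
          · have p1 : (Walk.cons (hadjvtx i (by omega)) Walk.nil : T.Walk (vtx i) (vtx (i+1))).IsPath := by
              simp [Walk.isPath_def, hvne i (i+1) hid hjd (by omega)]
            have p2 : (Walk.cons ha1 (Walk.cons ha2.symm Walk.nil) : T.Walk (vtx i) (vtx (i+1))).IsPath := by
              simp [Walk.isPath_def, List.nodup_cons, hwvi, hwvj, hwvi.symm, hwvj.symm,
                hvne i (i+1) hid hjd (by omega)]
            have heq := (tpath_eq hT p1).trans (tpath_eq hT p2).symm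
            have hlen := congrArg Walk.length heq
            simp at hlen
          · have p1 : (Walk.cons (hadjvtx i (by omega))
                (Walk.cons (hadjvtx (i+1) (by omega)) Walk.nil) : T.Walk (vtx i) (vtx (i+2))).IsPath := by
              have e12 : i + 1 + 1 = i + 2 := by omega
              simp [Walk.isPath_def, List.nodup_cons, hvne i (i+1) hid (by omega) (by omega),
                hvne i (i+2) hid hjd (by omega), hvne (i+1) (i+2) (by omega) hjd (by omega)]
            have p2 : (Walk.cons ha1 (Walk.cons ha2.symm Walk.nil) : T.Walk (vtx i) (vtx (i+2))).IsPath := by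
              simp [Walk.isPath_def, List.nodup_cons, hwvi, hwvj, hwvi.symm, hwvj.symm,
                hvne i (i+2) hid hjd (by omega)]
            have heq := (tpath_eq hT p2).trans (tpath_eq hT p1).symm
            have hsupp := congrArg Walk.support heq
            simp only [Walk.support_cons, Walk.support_nil] at hsupp
            have hw1 : w = vtx (i+1) := by
              have := List.cons.inj hsupp
              exact (List.cons.inj this.2).1
            exact hwQ (hw1 ▸ hvmem (i+1) (by omega))
        have hball : ∀ v ∈ D, T.dist x v ≤ k - 1 := by
          intro v hv
          have hvx : x ∈ (tpath hT r v).support := hv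
          have hlen : ((tpath hT r v).takeUntil x hvx).length
              + ((tpath hT r v).dropUntil x hvx).length = (tpath hT r v).length := by
            rw [← Walk.length_append, (tpath hT r v).take_spec hvx]
          rw [takeUntil_tpath hT hvx] at hlen
          have h1 : (tpath hT r x).length = d - (k-1) := by
            rw [length_tpath]; exact hdistrv (k-1) (by omega)
          have h2 : (tpath hT r v).length = T.dist r v := length_tpath hT r v
          have h3 : T.dist r v ≤ d := hℓ v
          have h4 : T.dist x v ≤ ((tpath hT r v).dropUntil x hvx).length :=
            SimpleGraph.dist_le _
          omega
        -- counting
        set A : Set V := {v : V | (T.neighborSet v).ncard = 2} with hA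
        have hWex' : ∀ i : ℕ, ∃ w : V, 1 ≤ i → i ≤ k-1 → (T.neighborSet (vtx i)).ncard ≠ 2 →
            (T.Adj (vtx i) w ∧ w ∉ Q.support ∧ w ∈ D) := by
          intro i
          by_cases h : 1 ≤ i ∧ i ≤ k-1 ∧ (T.neighborSet (vtx i)).ncard ≠ 2
          · obtain ⟨w, hw⟩ := hextra i h.1 h.2.1 h.2.2
            exact ⟨w, fun _ _ _ => hw⟩
          · exact ⟨r, fun h1 h2 h3 => absurd ⟨h1, h2, h3⟩ h⟩
        choose W hW using hWex'
        set I3 : Finset ℕ :=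
          (Finset.Icc 1 (k-1)).filter (fun i => ¬ (T.neighborSet (vtx i)).ncard = 2) with hI3
        set I2 : Finset ℕ :=
          (Finset.Icc 1 (k-1)).filter (fun i => (T.neighborSet (vtx i)).ncard = 2) with hI2
        have hI3spec : ∀ i ∈ I3, T.Adj (vtx i) (W i) ∧ W i ∉ Q.support ∧ W i ∈ D := by
          intro i hi
          rw [hI3, Finset.mem_filter, Finset.mem_Icc] at hi
          exact hW i hi.1.1 hi.1.2 hi.2
        have hI3mem : ∀ i ∈ I3, 1 ≤ i ∧ i ≤ k - 1 := by
          intro i hi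
          rw [hI3, Finset.mem_filter, Finset.mem_Icc] at hi
          exact hi.1
        have hVimg : (vtx '' ↑(Finset.range k)).ncard = k := by
          rw [Set.ncard_image_of_injOn, Set.ncard_coe_finset, Finset.card_range]
          intro i hi j hj hij
          simp only [Finset.coe_range, mem_Iio] at hi hj
          exact hvinj i j (by omega) (by omega) hij
        have hWimg : (W '' ↑I3).ncard = I3.card := by
          rw [Set.ncard_image_of_injOn, Set.ncard_coe_finset]
          intro i hi j hj hij
          simp only [Finset.mem_coe] at hi hj
          by_contra hne
          obtain ⟨hi1, hi2⟩ := hI3mem i hi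
          obtain ⟨hj1, hj2⟩ := hI3mem j hj
          rcases Nat.lt_or_ge i j with h | h
          · exact hwdist i j (W i) hi1 h hj2 (hI3spec i hi).2.1 (hI3spec i hi).1
              (hij ▸ (hI3spec j hj).1)
          · have h' : j < i := by omega
            exact hwdist j i (W j) hj1 h' hi2 (hI3spec j hj).2.1 (hI3spec j hj).1
              (hij ▸ (hI3spec i hi).1)
        have hsub1 : vtx '' ↑(Finset.range k) ⊆ D := by
          rintro _ ⟨i, hi, rfl⟩
          simp only [Finset.coe_range, mem_Iio] at hi
          exact hvD i (by omega)
        have hsub2 : W '' ↑I3 ⊆ D := by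
          rintro _ ⟨i, hi, rfl⟩
          exact (hI3spec i hi).2.2
        have hdisj : Disjoint (vtx '' ↑(Finset.range k)) (W '' ↑I3) := by
          rw [Set.disjoint_left]
          rintro _ ⟨i, hi, rfl⟩ ⟨j, hj, hji⟩
          simp only [Finset.coe_range, mem_Iio] at hi
          exact (hI3spec j hj).2.1 (hji ▸ hvmem i (by omega))
        have hDge : k + I3.card ≤ D.ncard := by
          have hu := Set.ncard_union_eq hdisj (Set.toFinite _) (Set.toFinite _)
          have hle := Set.ncard_le_ncard (Set.union_subset hsub1 hsub2) (Set.toFinite _)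
          omega
        have hDA : I2.card ≤ (D ∩ A).ncard := by
          have himg : vtx '' ↑I2 ⊆ D ∩ A := by
            rintro _ ⟨i, hi, rfl⟩
            rw [hI2, Finset.coe_filter, mem_setOf_eq, Finset.mem_Icc] at hi
            exact ⟨hvD i (by omega), hi.2⟩
          have hinj : (vtx '' ↑I2).ncard = I2.card := by
            rw [Set.ncard_image_of_injOn, Set.ncard_coe_finset]
            intro i hi j hj hij
            rw [hI2, Finset.coe_filter, mem_setOf_eq, Finset.mem_Icc] at hi hj
            exact hvinj i j (by omega) (by omega) hij
          have := Set.ncard_le_ncard himg (Set.toFinite _)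
          omega
        have hIsplit : I2.card + I3.card = k - 1 := by
          rw [hI2, hI3, Finset.card_filter_add_card_filter_not, Nat.card_Icc]
          omega
        -- the complement subtree
        set S : Set V := Dᶜ with hS
        have hrS : r ∈ S := hrD
        have hDSn : D.ncard + S.ncard = Fintype.card V := by
          rw [hS]
          rw [Set.ncard_add_ncard_compl, Nat.card_eq_fintype_card]
        have hAsplit : (D ∩ A).ncard + (S ∩ A).ncard = A.ncard := by
          have hdisj2 : Disjoint (D ∩ A) (S ∩ A) :=
            Set.disjoint_of_subset inter_subset_left inter_subset_left disjoint_compl_right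
          rw [← Set.ncard_union_eq hdisj2 (Set.toFinite _) (Set.toFinite _)]
          congr 1
          rw [hS, Set.inter_comm D A, Set.inter_comm Dᶜ A, Set.inter_union_compl]
        set T' := T.induce S with hT'def
        have hsuppS : ∀ w, w ∈ S → ∀ z ∈ (tpath hT r w).support, z ∈ S := by
          intro w hw z hz
          intro hzD
          exact hw (hmono w z hz hzD)
        have hT'tree : T'.IsTree := by
          constructor
          · have hreach : ∀ b : ↥S, T'.Reachable ⟨r, hrS⟩ b := by
              rintro ⟨b, hb⟩
              exact ⟨liftWalk (tpath hT r b) (hsuppS b hb)⟩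
            haveI : Nonempty ↥S := ⟨⟨r, hrS⟩⟩
            exact SimpleGraph.Connected.mk (fun a b => (hreach a).symm.trans (hreach b))
          · exact isAcyclic_induce hT.2
        have hdeg' : ∀ z : ↥S, (T'.neighborSet z).ncard = (T.neighborSet ↑z ∩ S).ncard := by
          intro z
          rw [← Set.ncard_image_of_injective _ (Subtype.val_injective)]
          congr 1
          ext w
          constructor
          · rintro ⟨w', hw', rfl⟩
            exact ⟨hw', w'.2⟩
          · rintro ⟨hw, hwS⟩
            exact ⟨⟨w, hwS⟩, hw, rfl⟩
        have hpar : ∀ v, v ∈ S → T.Adj x v → v = vtx k := by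
          intro v hv hadj
          by_cases hvQ : v ∈ Q.support
          · rcases hnbr (k-1) v (by omega) le_rfl hvQ hadj with h | h
            · exfalso
              apply hv
              rw [h]
              exact hvD (k-1-1) (by omega)
            · rw [h]
              congr 1
              omega
          · exact absurd (hwD (k-1) v le_rfl hadj hvQ) hv
        have hnbhdS : ∀ v, v ∈ S → v ≠ vtx k → T.neighborSet v ∩ S = T.neighborSet v := by
          intro v hv hvk
          apply subset_antisymm inter_subset_left
          intro u hu
          refine ⟨hu, ?_⟩
          intro huD
          have hadju : T.Adj v u := hu
          have hux : u = x := hcross u v huD hv hadju.symm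
          exact hvk (hpar v hv (hux ▸ hadju.symm))
        have hA'card : {z : ↥S | (T'.neighborSet z).ncard = 2}.ncard ≤ (S ∩ A).ncard + 1 := by
          have himg : Subtype.val '' {z : ↥S | (T'.neighborSet z).ncard = 2}
              ⊆ (S ∩ A) ∪ {vtx k} := by
            rintro _ ⟨z, hz, rfl⟩
            by_cases hzk : (z : V) = vtx k
            · exact Or.inr hzk
            · left
              refine ⟨z.2, ?_⟩
              rw [hA, mem_setOf_eq, ← hnbhdS ↑z z.2 hzk, ← hdeg' z]
              exact hz
          calc {z : ↥S | (T'.neighborSet z).ncard = 2}.ncard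
              = (Subtype.val '' {z : ↥S | (T'.neighborSet z).ncard = 2}).ncard :=
                (Set.ncard_image_of_injective _ (Subtype.val_injective)).symm
            _ ≤ ((S ∩ A) ∪ {vtx k}).ncard := Set.ncard_le_ncard himg (Set.toFinite _)
            _ ≤ (S ∩ A).ncard + 1 := by
                refine le_trans (Set.ncard_union_le _ _) ?_
                simp
        have hScard : Fintype.card ↥S = S.ncard := by
          rw [← Nat.card_coe_set_eq, Nat.card_eq_fintype_card]
        have hone : 1 ≤ D.ncard := by
          have : 0 < D.ncard := (Set.ncard_pos (Set.toFinite _)).mpr ⟨x, hxD⟩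
          omega
        have hcount' : Fintype.card ↥S + {z : ↥S | (T'.neighborSet z).ncard = 2}.ncard
            ≤ (k-1) * ((k-1) - 1) := by
          obtain ⟨m, rfl⟩ : ∃ m, k = m + 2 := ⟨k-2, by omega⟩
          have hq1 : (m+2) * ((m+2) - 1) = (m+1) * m + (2*m + 2) := by
            have h21 : (m+2) - 1 = m + 1 := rfl
            rw [h21]; ring
          have hq2 : (m+2-1) * ((m+2-1) - 1) = (m+1) * m := by
            have h21 : (m+2) - 1 = m + 1 := rfl
            have h11 : (m+1) - 1 = m := rfl
            rw [h21, h11]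
          rw [hq2]
          rw [hq1] at hcount
          omega
        have hcard' : Fintype.card ↥S ≤ N := by omega
        obtain ⟨y, hy⟩ := ih T' hT'tree (k-1) hcard' hcount'
        refine ⟨fun i => if h : (i : ℕ) = 0 then x else
          ↑(y ⟨(i : ℕ) - 1, by omega⟩), fun v => ?_⟩
        by_cases hvD2 : v ∈ D
        · refine ⟨⟨0, by omega⟩, ?_⟩
          simp only [dif_pos rfl]
          exact ⟨hconn.preconnected x v, by simpa using hball v hvD2⟩
        · obtain ⟨j, hj⟩ := hy ⟨v, hvD2⟩
          refine ⟨⟨(j : ℕ) + 1, by omega⟩, ?_⟩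
          simp only [Nat.add_sub_cancel, dif_neg (Nat.succ_ne_zero (j : ℕ)), Fin.eta]
          constructor
          · exact hconn.preconnected _ v
          · refine le_trans (dist_induce_le hj.1) (le_trans hj.2 ?_)
            omega

end BurnAux

theorem burning_tree_le_ceil_sqrt_n_add_n2 {V : Type*} [Fintype V]
    (T : SimpleGraph V) [DecidableRel T.Adj] (hT : T.IsTree) (n2 : ℕ)
    (hn2 : {v : V | T.degree v = 2}.ncard = n2) :
    burningNumber T ≤
      ⌈Real.sqrt (((Fintype.card V : ℝ) + n2) + 1 / 4) + 1 / 2⌉₊ := by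
  classical
  have hdeg : ∀ v : V, T.degree v = (T.neighborSet v).ncard := by
    intro v
    rw [Set.ncard_eq_toFinset_card']
    rfl
  have hset : {v : V | (T.neighborSet v).ncard = 2}.ncard = n2 := by
    rw [← hn2]
    congr 1
    ext v
    simp [hdeg v]
  set m := Fintype.card V + n2 with hm
  set k := ⌈Real.sqrt (((Fintype.card V : ℝ) + n2) + 1 / 4) + 1 / 2⌉₊ with hk
  have hmr : (0:ℝ) ≤ ((Fintype.card V : ℝ) + n2) + 1/4 := by positivity
  have hceil : Real.sqrt (((Fintype.card V : ℝ) + n2) + 1 / 4) + 1 / 2 ≤ (k:ℝ) :=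
    Nat.le_ceil _
  have hk1 : 1 ≤ k := by
    have h0 : (0:ℝ) < Real.sqrt (((Fintype.card V : ℝ) + n2) + 1 / 4) + 1 / 2 := by
      have := Real.sqrt_nonneg (((Fintype.card V : ℝ) + n2) + 1 / 4)
      linarith
    exact Nat.one_le_ceil_iff.mpr h0
  have hsq : ((Fintype.card V : ℝ) + n2) + 1/4 ≤ ((k:ℝ) - 1/2)^2 := by
    have h1 : Real.sqrt (((Fintype.card V : ℝ) + n2) + 1 / 4) ≤ (k:ℝ) - 1/2 := by
      linarith
    have h2 : (0:ℝ) ≤ Real.sqrt (((Fintype.card V : ℝ) + n2) + 1 / 4) :=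
      Real.sqrt_nonneg _
    calc ((Fintype.card V : ℝ) + n2) + 1/4
        = (Real.sqrt (((Fintype.card V : ℝ) + n2) + 1 / 4))^2 := (Real.sq_sqrt hmr).symm
      _ ≤ ((k:ℝ) - 1/2)^2 := by
          apply pow_le_pow_left₀ h2 h1
  have hmk : m ≤ k * (k - 1) := by
    have hcast : ((k * (k-1) : ℕ) : ℝ) = (k:ℝ) * ((k:ℝ) - 1) := by
      push_cast [Nat.cast_sub hk1]
      ring
    have hr : (m : ℝ) ≤ ((k * (k-1) : ℕ) : ℝ) := by
      rw [hcast, hm]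
      push_cast
      nlinarith [hsq]
    exact_mod_cast hr
  obtain ⟨xs, hxs⟩ := BurnAux.key (Fintype.card V) T hT k le_rfl (by rw [hset]; exact hmk)
  exact Nat.sInf_le ⟨xs, hxs⟩
end

section
/- The path P_n on n ≥ 1 vertices has burning number b(P_n) = ⌈√n⌉. -/
/-- Any walk in the path graph has length at least the coordinate distance. -/
lemma pathWalk_length_ge {n : ℕ} {u v : Fin n}
    (w : (SimpleGraph.pathGraph n).Walk u v) : Nat.dist u.val v.val ≤ w.length := by
  induction w with
  | nil => simp [Nat.dist]
  | @cons a b c h p ih =>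
    rw [SimpleGraph.pathGraph_adj] at h
    simp only [SimpleGraph.Walk.length_cons]
    simp only [Nat.dist] at ih ⊢
    omega

lemma pathGraph_dist_le {n : ℕ} (k : ℕ) : ∀ (u v : Fin n), v.val = u.val + k →
    (SimpleGraph.pathGraph n).dist u v ≤ k := by
  induction k with
  | zero =>
    intro u v h
    have : u = v := Fin.ext (by omega)
    simp [this]
  | succ k ih =>
    intro u v h
    have hv : v.val < n := v.isLt
    have hu1 : u.val + 1 < n := by omega
    set u' : Fin n := ⟨u.val + 1, hu1⟩ with hu'
    have hadj : (SimpleGraph.pathGraph n).Adj u u' :=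
      SimpleGraph.pathGraph_adj.mpr (Or.inl rfl)
    have h1 : (SimpleGraph.pathGraph n).dist u u' = 1 :=
      SimpleGraph.dist_eq_one_iff_adj.mpr hadj
    have hconn : (SimpleGraph.pathGraph n).Connected := by
      have : Nonempty (Fin n) := ⟨u⟩
      exact ⟨SimpleGraph.pathGraph_preconnected n⟩
    have htri := hconn.dist_triangle (u := u) (v := u') (w := v)
    have h2 := ih u' v (by simp [hu']; omega)
    omega

/-- Distance in the path graph is the coordinate distance. -/
lemma pathGraph_dist_eq {n : ℕ} (u v : Fin n) :
    (SimpleGraph.pathGraph n).dist u v = Nat.dist u.val v.val := by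
  refine le_antisymm ?_ ?_
  · rcases le_total u.val v.val with h | h
    · have := pathGraph_dist_le (v.val - u.val) u v (by omega)
      have hd : Nat.dist u.val v.val = v.val - u.val := by simp [Nat.dist]; omega
      omega
    · have := pathGraph_dist_le (u.val - v.val) v u (by omega)
      rw [SimpleGraph.dist_comm]
      have hd : Nat.dist u.val v.val = u.val - v.val := by simp [Nat.dist]; omega
      omega
  · obtain ⟨w, hw⟩ :=
      (SimpleGraph.pathGraph_preconnected n u v).exists_walk_length_eq_dist
    rw [← hw]
    exact pathWalk_length_ge w

lemma mem_ball_pathGraph {n : ℕ} (u v : Fin n) (k : ℕ) :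
    v ∈ ball (SimpleGraph.pathGraph n) u k ↔ Nat.dist u.val v.val ≤ k := by
  constructor
  · rintro ⟨-, hd⟩; rwa [pathGraph_dist_eq] at hd
  · intro h
    exact ⟨SimpleGraph.pathGraph_preconnected n u v, by rwa [pathGraph_dist_eq]⟩

lemma sum_odds (k : ℕ) : ∑ j ∈ Finset.range k, (2 * j + 1) = k * k := by
  induction k with
  | zero => simp
  | succ k ih => rw [Finset.sum_range_succ, ih]; ring

/-- A ball of radius `r` in `Fin n` (w.r.t. `Nat.dist`) has at most `2r+1` elements. -/
lemma card_natDist_ball_le {n : ℕ} (c r : ℕ) :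
    (Finset.univ.filter (fun v : Fin n => Nat.dist c v.val ≤ r)).card ≤ 2 * r + 1 := by
  have hsub : (Finset.univ.filter (fun v : Fin n => Nat.dist c v.val ≤ r)).card ≤
      (Finset.Icc (c - r) (c + r)).card := by
    apply Finset.card_le_card_of_injOn Fin.val
    · intro v hv
      simp only [Finset.mem_filter, Finset.mem_univ, true_and, Nat.dist] at hv
      replace hv : c - v.val + (v.val - c) ≤ r := (Finset.mem_filter.mp (Finset.mem_coe.mp hv)).2
      simp only [Finset.coe_Icc, Finset.mem_coe, Finset.mem_Icc, Set.mem_Icc]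
      omega
    · intro a _ b _ h
      exact Fin.ext h
  rw [Nat.card_Icc] at hsub
  omega

/-- Lower bound: a covering by `k` balls of radii `k-1, …, 0` forces `n ≤ k²`. -/
lemma path_burning_lower {n k : ℕ} (x : Fin k → Fin n)
    (hx : ∀ v : Fin n, ∃ i : Fin k,
      v ∈ ball (SimpleGraph.pathGraph n) (x i) (k - 1 - (i : ℕ))) : n ≤ k * k := by
  classical
  have hsub : (Finset.univ : Finset (Fin n)) ⊆
      Finset.univ.biUnion (fun i : Fin k =>
        Finset.univ.filter (fun v : Fin n => Nat.dist (x i).val v.val ≤ k - 1 - (i : ℕ))) := by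
    intro v _
    obtain ⟨i, hi⟩ := hx v
    rw [mem_ball_pathGraph] at hi
    exact Finset.mem_biUnion.mpr ⟨i, Finset.mem_univ i, by simp [hi]⟩
  have h1 : n ≤ ∑ i : Fin k, (2 * (k - 1 - (i : ℕ)) + 1) := by
    calc n = (Finset.univ : Finset (Fin n)).card := by simp
    _ ≤ _ := Finset.card_le_card hsub
    _ ≤ ∑ i : Fin k, (Finset.univ.filter
          (fun v : Fin n => Nat.dist (x i).val v.val ≤ k - 1 - (i : ℕ))).card :=
        Finset.card_biUnion_le
    _ ≤ ∑ i : Fin k, (2 * (k - 1 - (i : ℕ)) + 1) :=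
        Finset.sum_le_sum (fun i _ => card_natDist_ball_le _ _)
  have h2 : ∑ i : Fin k, (2 * (k - 1 - (i : ℕ)) + 1) = k * k := by
    rw [Fin.sum_univ_eq_sum_range (fun j => 2 * (k - 1 - j) + 1)]
    rw [Finset.sum_range_reflect (fun j => 2 * j + 1) k]
    exact sum_odds k
  omega

/-- The key linear-arithmetic fact for the covering. -/
lemma dist_min_aux {n K S0 S1 s vv : ℕ} (hrel : S1 = S0 + 2 * s + 1)
    (h0 : S0 ≤ K - 1 - vv) (h1 : K - 1 - vv < S1) (h2 : S1 ≤ K)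
    (hv : vv < n) (hnK : n ≤ K) :
    Nat.dist (min (K - S1 + s) (n - 1)) vv ≤ s := by
  simp only [Nat.dist]
  omega

/-- Upper bound: if `n ≤ k²` and `1 ≤ n, k`, there is a covering. -/
lemma path_burning_upper {n k : ℕ} (hn : 1 ≤ n) (hk : 1 ≤ k) (hnk : n ≤ k * k) :
    ∃ x : Fin k → Fin n, ∀ v : Fin n, ∃ i : Fin k,
      v ∈ ball (SimpleGraph.pathGraph n) (x i) (k - 1 - (i : ℕ)) := by
  refine ⟨fun i => ⟨min (k * k - (k - (i : ℕ)) * (k - (i : ℕ)) + (k - 1 - (i : ℕ))) (n - 1),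
    lt_of_le_of_lt (min_le_right _ _) (by omega)⟩, ?_⟩
  intro v
  have hv := v.isLt
  set s : ℕ := Nat.sqrt (k * k - 1 - v.val) with hs
  have hs0 : s * s ≤ k * k - 1 - v.val := Nat.sqrt_le _
  have hs1 : k * k - 1 - v.val < (s + 1) * (s + 1) := Nat.lt_succ_sqrt _
  have hsk : s < k := by
    refine Nat.sqrt_lt'.mpr ?_
    rw [pow_two]
    omega
  refine ⟨⟨k - 1 - s, by omega⟩, ?_⟩
  rw [mem_ball_pathGraph]
  simp only [Fin.val_mk]
  have e1 : k - (k - 1 - s) = s + 1 := by omega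
  have e2 : k - 1 - (k - 1 - s) = s := by omega
  rw [e1, e2]
  exact dist_min_aux (by ring) hs0 hs1 (Nat.mul_le_mul (by omega) (by omega)) hv hnk

lemma le_sq_ceil_sqrt (n : ℕ) : n ≤ ⌈Real.sqrt n⌉₊ * ⌈Real.sqrt n⌉₊ := by
  have h := Nat.le_ceil (Real.sqrt n)
  have h0 : (0 : ℝ) ≤ Real.sqrt n := Real.sqrt_nonneg _
  have hsq : Real.sqrt n * Real.sqrt n = (n : ℝ) := Real.mul_self_sqrt (by positivity)
  have : (n : ℝ) ≤ (⌈Real.sqrt n⌉₊ : ℝ) * (⌈Real.sqrt n⌉₊ : ℝ) := by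
    nlinarith
  exact_mod_cast this

lemma ceil_sqrt_le {n k : ℕ} (h : n ≤ k * k) : ⌈Real.sqrt n⌉₊ ≤ k := by
  rw [Nat.ceil_le]
  have h1 : (n : ℝ) ≤ (k : ℝ) * (k : ℝ) := by exact_mod_cast h
  have := Real.sqrt_le_sqrt h1
  rwa [Real.sqrt_mul_self (by positivity)] at this

theorem burning_pathGraph (n : ℕ) (hn : 1 ≤ n) :
    burningNumber (SimpleGraph.pathGraph n) = ⌈Real.sqrt n⌉₊ := by
  set k₀ := ⌈Real.sqrt n⌉₊ with hk₀
  have hnk₀ : n ≤ k₀ * k₀ := le_sq_ceil_sqrt n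
  have hk₀1 : 1 ≤ k₀ := by
    by_contra h
    interval_cases k₀ <;> omega
  have hmem : k₀ ∈ {k | ∃ x : Fin k → Fin n, ∀ v : Fin n, ∃ i : Fin k,
      v ∈ ball (SimpleGraph.pathGraph n) (x i) (k - 1 - (i : ℕ))} :=
    path_burning_upper hn hk₀1 hnk₀
  rw [burningNumber]
  refine le_antisymm (Nat.sInf_le hmem) (le_csInf ⟨k₀, hmem⟩ ?_)
  rintro k ⟨x, hx⟩
  exact ceil_sqrt_le (path_burning_lower x hx)
end

section
/- For every integer r ≥ 1, the tree T_r has burning number b(T_r) = r + 1, where T_1 is the tree on 2 vertices and, for r ≥ 2, T_r is the tree obtained from the perfect binary tree of depth r−1 by attaching one new leaf to each of its 2^{r−1} leaves. -/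
/-- The vertex type of the tree `T_r`: binary strings of length at most `r`
(a string is the sequence of child-choices from the root, most recent first),
where strings of length exactly `r` correspond to the unique new leaf attached to
each leaf of the perfect binary tree of depth `r - 1`, encoded by the choice `false`. -/
abbrev TrVert (r : ℕ) : Type :=
  {l : List Bool // l.length ≤ r ∧ (l.length = r → l.head? = some false)}

/-- The tree `T_r`: for `r = 1` it is the tree of order `2`, and for `r ≥ 2` it arises
from the perfect binary tree of depth `r - 1` by attaching a new leaf to each of its
`2 ^ (r - 1)` leaves. Two vertices are adjacent iff one is a child of the other. -/
def Tr (r : ℕ) : SimpleGraph (TrVert r) where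
  Adj a b := (∃ c : Bool, (b : List Bool) = c :: (a : List Bool)) ∨
             (∃ c : Bool, (a : List Bool) = c :: (b : List Bool))
  symm := ⟨fun a b h => h.symm⟩
  loopless := by
    constructor
    intro a h
    have : (a : List Bool).length = (a : List Bool).length + 1 := by
      rcases h with ⟨c, h⟩ | ⟨c, h⟩ <;> simpa using congrArg List.length h
    omega

namespace BurnAux

/-- longest common prefix length of two lists -/
def lcp : List Bool → List Bool → ℕ
  | a :: as, b :: bs => if a = b then lcp as bs + 1 else 0
  | _, _ => 0

lemma lcp_le_left : ∀ x y : List Bool, lcp x y ≤ x.length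
  | [], _ => by simp [lcp]
  | _ :: _, [] => by simp [lcp]
  | a :: as, b :: bs => by
    by_cases h : a = b <;> simp [lcp, h] <;> exact lcp_le_left as bs

lemma lcp_le_right : ∀ x y : List Bool, lcp x y ≤ y.length
  | [], _ => by simp [lcp]
  | _ :: _, [] => by simp [lcp]
  | a :: as, b :: bs => by
    by_cases h : a = b <;> simp [lcp, h] <;> exact lcp_le_right as bs

lemma take_lcp : ∀ x y : List Bool, x.take (lcp x y) = y.take (lcp x y)
  | [], y => by simp [lcp]
  | _ :: _, [] => by simp [lcp]
  | a :: as, b :: bs => by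
    by_cases h : a = b <;> simp [lcp, h]
    exact take_lcp as bs

lemma le_lcp : ∀ (x y : List Bool) (t : ℕ), t ≤ x.length → t ≤ y.length →
    x.take t = y.take t → t ≤ lcp x y
  | _, _, 0, _, _, _ => Nat.zero_le _
  | a :: as, b :: bs, t + 1, hx, hy, hteq => by
    simp at hx hy hteq
    obtain ⟨hab, ht⟩ := hteq
    simp [lcp, hab]
    exact le_lcp as bs t (by omega) (by omega) ht

lemma lcp_self : ∀ x : List Bool, lcp x x = x.length
  | [] => rfl
  | a :: as => by simp [lcp, lcp_self as]

lemma lcp_snoc_le (x y : List Bool) (c : Bool) : lcp (x ++ [c]) y ≤ lcp x y + 1 := by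
  set t := lcp (x ++ [c]) y with ht
  rcases le_or_gt t x.length with h | h
  · have h1 : x.take t = y.take t := by
      have := take_lcp (x ++ [c]) y
      rwa [← ht, List.take_append_of_le_length h] at this
    have := le_lcp x y t h (le_trans (lcp_le_right _ _) le_rfl) h1
    omega
  · -- t = x.length + 1 at most
    have h2 : t ≤ x.length + 1 := by
      have := lcp_le_left (x ++ [c]) y
      simpa using this
    have h3 : x.length ≤ lcp x y := by
      apply le_lcp x y x.length le_rfl
      · have := lcp_le_right (x ++ [c]) y; omega
      · have h4 := take_lcp (x ++ [c]) y
        have h5 : ((x ++ [c]).take t).take x.length = (y.take t).take x.length := by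
          rw [← ht] at h4; rw [h4]
        rw [List.take_take, List.take_take] at h5
        rw [min_eq_left (show x.length ≤ t by omega)] at h5
        rw [List.take_append_of_le_length le_rfl, List.take_length] at h5
        rw [List.take_length]
        exact h5
    omega

lemma lcp_le_snoc (x y : List Bool) (c : Bool) : lcp x y ≤ lcp (x ++ [c]) y := by
  apply le_lcp
  · simp; have := lcp_le_left x y; omega
  · exact lcp_le_right x y
  · rw [List.take_append_of_le_length (lcp_le_left x y)]
    exact take_lcp x y

lemma take_eq_of_le_lcp {x y : List Bool} {c : ℕ} (h : c ≤ lcp x y) :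
    x.take c = y.take c := by
  have h1 := take_lcp x y
  have h2 : (x.take (lcp x y)).take c = (y.take (lcp x y)).take c := by rw [h1]
  rwa [List.take_take, List.take_take, min_eq_left h] at h2

/-- the finset of all boolean lists of length `n` -/
def lists : ℕ → Finset (List Bool)
  | 0 => {[]}
  | n + 1 => ((lists n).image (true :: ·)) ∪ ((lists n).image (false :: ·))

lemma mem_lists {n : ℕ} {l : List Bool} : l ∈ lists n ↔ l.length = n := by
  induction n generalizing l with
  | zero => simp [lists, List.length_eq_zero_iff]
  | succ n ih =>
    constructor
    · intro h
      simp only [lists, Finset.mem_union, Finset.mem_image] at h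
      rcases h with ⟨t, ht, rfl⟩ | ⟨t, ht, rfl⟩ <;> simp [ih.mp ht]
    · intro h
      cases l with
      | nil => simp at h
      | cons b t =>
        have ht : t ∈ lists n := ih.mpr (by simpa using h)
        cases b <;> simp only [lists, Finset.mem_union, Finset.mem_image] <;>
          [right; left] <;> exact ⟨t, ht, rfl⟩

lemma card_lists (n : ℕ) : (lists n).card = 2 ^ n := by
  induction n with
  | zero => rfl
  | succ n ih =>
    have hinj : Function.Injective (fun l : List Bool => (true :: l)) :=
      fun a b h => by simpa using h
    have hinj' : Function.Injective (fun l : List Bool => (false :: l)) :=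
      fun a b h => by simpa using h
    rw [lists, Finset.card_union_of_disjoint, Finset.card_image_of_injective _ hinj,
      Finset.card_image_of_injective _ hinj', ih]
    · ring
    · simp only [Finset.disjoint_left, Finset.mem_image]
      rintro l ⟨t, _, rfl⟩ ⟨t', _, h⟩
      simp at h

end BurnAux

namespace BurnAux
open SimpleGraph

variable {r : ℕ}

def root (r : ℕ) (hr : 1 ≤ r) : TrVert r :=
  ⟨[], ⟨Nat.zero_le r, fun h => absurd h (by simp; omega)⟩⟩

lemma exists_walk_to_root (hr : 1 ≤ r) (v : TrVert r) :
    ∃ W : (Tr r).Walk v (root r hr), W.length = (v : List Bool).length := by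
  obtain ⟨l, hl⟩ := v
  induction l with
  | nil => exact ⟨SimpleGraph.Walk.nil, rfl⟩
  | cons c cs ih =>
    have hlen : cs.length + 1 ≤ r := by simpa using hl.1
    have hcs : cs.length ≤ r ∧ (cs.length = r → cs.head? = some false) :=
      ⟨by omega, fun h => absurd h (by omega)⟩
    obtain ⟨W, hW⟩ := ih hcs
    exact ⟨SimpleGraph.Walk.cons (Or.inr ⟨c, rfl⟩) W, by show W.length + 1 = cs.length + 1; rw [hW]⟩

lemma tr_reachable (hr : 1 ≤ r) (u v : TrVert r) : (Tr r).Reachable u v := by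
  obtain ⟨W1, -⟩ := exists_walk_to_root hr u
  obtain ⟨W2, -⟩ := exists_walk_to_root hr v
  exact ⟨W1.append W2.reverse⟩

lemma walk_low {a b : TrVert r} (W : (Tr r).Walk a b) :
    (a : List Bool).length + (b : List Bool).length ≤
      W.length + 2 * lcp (a : List Bool).reverse (b : List Bool).reverse := by
  induction W with
  | nil => rw [lcp_self]; simp; omega
  | @cons u v w h W ih =>
    rcases h with ⟨c, hc⟩ | ⟨c, hc⟩
    · -- (v : List Bool) = c :: u
      have hrev : (v : List Bool).reverse = (u : List Bool).reverse ++ [c] := by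
        rw [hc, List.reverse_cons]
      have hlen : (v : List Bool).length = (u : List Bool).length + 1 := by
        rw [hc]; simp
      have h1 := lcp_snoc_le (u : List Bool).reverse (w : List Bool).reverse c
      rw [← hrev] at h1
      show (u : List Bool).length + (w : List Bool).length ≤
        W.length + 1 + 2 * lcp (u : List Bool).reverse (w : List Bool).reverse
      omega
    · -- (u : List Bool) = c :: v
      have hrev : (u : List Bool).reverse = (v : List Bool).reverse ++ [c] := by
        rw [hc, List.reverse_cons]
      have hlen : (u : List Bool).length = (v : List Bool).length + 1 := by
        rw [hc]; simp
      have h1 := lcp_le_snoc (v : List Bool).reverse (w : List Bool).reverse c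
      rw [← hrev] at h1
      show (u : List Bool).length + (w : List Bool).length ≤
        W.length + 1 + 2 * lcp (u : List Bool).reverse (w : List Bool).reverse
      omega

lemma dist_low (hr : 1 ≤ r) (a b : TrVert r) :
    (a : List Bool).length + (b : List Bool).length ≤
      (Tr r).dist a b + 2 * lcp (a : List Bool).reverse (b : List Bool).reverse := by
  obtain ⟨W, hW⟩ := (tr_reachable hr a b).exists_walk_length_eq_dist
  have := walk_low W
  omega

lemma ball_lcp (hr : 1 ≤ r) {u v : TrVert r} {ρ : ℕ} (hv : v ∈ _root_.ball (Tr r) u ρ) :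
    (u : List Bool).length + (v : List Bool).length ≤
      ρ + 2 * lcp (u : List Bool).reverse (v : List Bool).reverse := by
  have h1 := dist_low hr u v
  have h2 : (Tr r).dist u v ≤ ρ := hv.2
  omega

noncomputable instance fintypeTrVert (r : ℕ) : Fintype (TrVert r) := by
  apply Fintype.ofInjective (fun v : TrVert r => (fun i : Fin (r + 1) => (v : List Bool)[(i : ℕ)]?))
  intro a b h
  apply Subtype.ext
  apply List.ext_getElem?
  intro n
  by_cases hn : n < r + 1
  · exact congrFun h ⟨n, hn⟩
  · rw [List.getElem?_eq_none (by have := a.2.1; omega),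
      List.getElem?_eq_none (by have := b.2.1; omega)]

lemma lcp_comm : ∀ x y : List Bool, lcp x y = lcp y x
  | [], [] => rfl
  | [], _ :: _ => rfl
  | _ :: _, [] => rfl
  | a :: as, b :: bs => by
    simp only [lcp]
    by_cases h : a = b
    · subst h; simp [lcp_comm as bs]
    · rw [if_neg h, if_neg (fun hh => h hh.symm)]

/-- a pendant vertex is `false :: tail`. -/
lemma pendant_eq {r : ℕ} (v : TrVert r) (hvr : (v : List Bool).length = r) :
    ∃ t : List Bool, (v : List Bool) = false :: t := by
  have h := v.2.2 hvr
  cases hv : (v : List Bool) with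
  | nil => rw [hv] at h; simp at h
  | cons b t =>
    rw [hv] at h
    simp at h
    exact ⟨t, by rw [h]⟩

lemma ball_card {r : ℕ} (hr : 1 ≤ r) (u : TrVert r) (ρ : ℕ) (hρ : ρ < r)
    (s : Finset (TrVert r))
    (hs : ∀ v ∈ s, r - 1 ≤ (v : List Bool).length ∧ v ∈ _root_.ball (Tr r) u ρ) :
    s.card ≤ 2 ^ ρ := by
  classical
  set m := (u : List Bool).length with hm
  rcases Nat.eq_zero_or_pos ρ with hρ0 | hρ1
  · -- radius 0 : ball is {u}
    subst hρ0
    have hsub : ∀ v ∈ s, v = u := by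
      intro v hv
      obtain ⟨-, hreach, hd⟩ := hs v hv
      have : (Tr r).dist u v = 0 := by omega
      exact (hreach.dist_eq_zero_iff.mp this).symm
    calc s.card ≤ ({u} : Finset (TrVert r)).card := by
          apply Finset.card_le_card; intro v hv; simp [hsub v hv]
      _ ≤ 2 ^ 0 := by simp
  have key : ∀ v ∈ s, ((v : List Bool).length = r - 1 ∨ (v : List Bool).length = r) ∧
      m + (v : List Bool).length ≤ ρ + 2 * lcp (u : List Bool).reverse (v : List Bool).reverse ∧
      lcp (u : List Bool).reverse (v : List Bool).reverse ≤ m := by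
    intro v hv
    obtain ⟨hdeep, hball⟩ := hs v hv
    refine ⟨?_, ball_lcp hr hball, by rw [hm]; simpa using lcp_le_left (u : List Bool).reverse (v : List Bool).reverse⟩
    have := v.2.1
    omega
  by_cases hp : ∃ p ∈ s, (p : List Bool).length = r
  · -- there is a pendant leaf in s
    obtain ⟨p, hps, hpr⟩ := hp
    set c := r - ρ with hc
    have hmc : c ≤ m := by
      obtain ⟨-, h2, h3⟩ := key p hps
      omega
    have htake : ∀ v ∈ s, (v : List Bool).reverse.take c = (u : List Bool).reverse.take c := by
      intro v hv
      obtain ⟨h1, h2, -⟩ := key v hv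
      have hlcp : c ≤ lcp (v : List Bool).reverse (u : List Bool).reverse := by
        rw [lcp_comm]; omega
      exact take_eq_of_le_lcp hlcp
    set F : TrVert r → Bool × List Bool := fun v =>
      if (v : List Bool).length = r then (true, ((v : List Bool).reverse.drop c).dropLast)
      else (false, (v : List Bool).reverse.drop c) with hF
    have hcard : ((Finset.univ : Finset Bool) ×ˢ lists (ρ - 1)).card = 2 ^ ρ := by
      rw [Finset.card_product, Finset.card_univ, Fintype.card_bool, card_lists,
        mul_comm, ← pow_succ]
      congr 1
      omega
    rw [← hcard]
    apply Finset.card_le_card_of_injOn F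
    · -- maps into the product
      intro v hv
      obtain ⟨h1, -, -⟩ := key v hv
      rw [Finset.mem_coe, Finset.mem_product]
      refine ⟨Finset.mem_univ _, ?_⟩
      by_cases h1' : (v : List Bool).length = r
      · have : (F v).2 = ((v : List Bool).reverse.drop c).dropLast := by
          simp only [hF]; rw [if_pos h1']
        rw [this, mem_lists]
        simp only [List.length_dropLast, List.length_drop, List.length_reverse, h1']
        omega
      · have hl : (v : List Bool).length = r - 1 := by omega
        have : (F v).2 = (v : List Bool).reverse.drop c := by
          simp only [hF]; rw [if_neg h1']
        rw [this, mem_lists]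
        simp only [List.length_drop, List.length_reverse, hl]
        omega
    · -- injective on s
      intro v hv w hw hFeq
      by_cases hv' : (v : List Bool).length = r <;> by_cases hw' : (w : List Bool).length = r
      · -- both pendant
        obtain ⟨tv, htv⟩ := pendant_eq v hv'
        obtain ⟨tw, htw⟩ := pendant_eq w hw'
        have hltv : tv.length = r - 1 := by
          have := congrArg List.length htv; simp at this; omega
        have hltw : tw.length = r - 1 := by
          have := congrArg List.length htw; simp at this; omega
        have hvrev : (v : List Bool).reverse = tv.reverse ++ [false] := by rw [htv]; simp
        have hwrev : (w : List Bool).reverse = tw.reverse ++ [false] := by rw [htw]; simp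
        have hcle : c ≤ tv.reverse.length := by simp [hltv]; omega
        have hcle' : c ≤ tw.reverse.length := by simp [hltw]; omega
        have hdropv : ((v : List Bool).reverse.drop c).dropLast = tv.reverse.drop c := by
          rw [hvrev, List.drop_append_of_le_length hcle, List.dropLast_concat]
        have hdropw : ((w : List Bool).reverse.drop c).dropLast = tw.reverse.drop c := by
          rw [hwrev, List.drop_append_of_le_length hcle', List.dropLast_concat]
        have hdeq : tv.reverse.drop c = tw.reverse.drop c := by
          simp only [hF] at hFeq
          rw [if_pos hv', if_pos hw'] at hFeq
          rw [← hdropv, ← hdropw]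
          exact congrArg Prod.snd hFeq
        have hteq : tv.reverse.take c = tw.reverse.take c := by
          have h1 := htake v hv
          have h2 := htake w hw
          rw [hvrev, List.take_append_of_le_length hcle] at h1
          rw [hwrev, List.take_append_of_le_length hcle'] at h2
          rw [h1, h2]
        have : tv.reverse = tw.reverse := by
          rw [← List.take_append_drop c tv.reverse, ← List.take_append_drop c tw.reverse,
            hteq, hdeq]
        have : tv = tw := List.reverse_injective this
        apply Subtype.ext
        rw [htv, htw, this]
      · -- mixed : contradiction via tags
        exfalso
        simp only [hF] at hFeq
        rw [if_pos hv', if_neg hw'] at hFeq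
        simpa using congrArg Prod.fst hFeq
      · exfalso
        simp only [hF] at hFeq
        rw [if_neg hv', if_pos hw'] at hFeq
        simpa using congrArg Prod.fst hFeq
      · -- both inner
        have hdeq : (v : List Bool).reverse.drop c = (w : List Bool).reverse.drop c := by
          simp only [hF] at hFeq
          rw [if_neg hv', if_neg hw'] at hFeq
          exact congrArg Prod.snd hFeq
        have hteq : (v : List Bool).reverse.take c = (w : List Bool).reverse.take c := by
          rw [htake v hv, htake w hw]
        have : (v : List Bool).reverse = (w : List Bool).reverse := by
          rw [← List.take_append_drop c (v : List Bool).reverse,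
            ← List.take_append_drop c (w : List Bool).reverse, hteq, hdeq]
        exact Subtype.ext (List.reverse_injective this)
  · -- no pendant leaf : all lengths are r - 1
    push_neg at hp
    set c := r - 1 - ρ with hc
    have hlen : ∀ v ∈ s, (v : List Bool).length = r - 1 := by
      intro v hv
      obtain ⟨h1, -, -⟩ := key v hv
      rcases h1 with h1 | h1
      · exact h1
      · exact absurd h1 (hp v hv)
    have htake : ∀ v ∈ s, (v : List Bool).reverse.take c = (u : List Bool).reverse.take c := by
      intro v hv
      obtain ⟨-, h2, h3⟩ := key v hv
      rw [hlen v hv] at h2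
      have hmge : c ≤ m := by omega
      have hlcp : c ≤ lcp (v : List Bool).reverse (u : List Bool).reverse := by
        rw [lcp_comm]; omega
      exact take_eq_of_le_lcp hlcp
    rw [← card_lists ρ]
    refine Finset.card_le_card_of_injOn (fun v : TrVert r => (v : List Bool).reverse.drop c) ?_ ?_
    · intro v hv
      rw [Finset.mem_coe, mem_lists]
      simp only [List.length_drop, List.length_reverse, hlen v hv]
      omega
    · intro v hv w hw hFeq
      simp only at hFeq
      have hteq : (v : List Bool).reverse.take c = (w : List Bool).reverse.take c := by
        rw [htake v hv, htake w hw]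
      have : (v : List Bool).reverse = (w : List Bool).reverse := by
        rw [← List.take_append_drop c (v : List Bool).reverse,
          ← List.take_append_drop c (w : List Bool).reverse, hteq, hFeq]
      exact Subtype.ext (List.reverse_injective this)

lemma sum_two_pow (k : ℕ) : ∑ j ∈ Finset.range k, 2 ^ j = 2 ^ k - 1 := by
  induction k with
  | zero => rfl
  | succ k ih =>
    rw [Finset.sum_range_succ, ih]
    have : 1 ≤ 2 ^ k := Nat.one_le_two_pow
    have : 2 ^ (k + 1) = 2 * 2 ^ k := by ring
    omega

lemma deep_card (hr : 1 ≤ r) :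
    2 ^ r ≤ (Finset.univ.filter
      (fun v : TrVert r => r - 1 ≤ (v : List Bool).length)).card := by
  classical
  set D := Finset.univ.filter (fun v : TrVert r => r - 1 ≤ (v : List Bool).length) with hD
  have hcard : ((Finset.univ : Finset Bool) ×ˢ lists (r - 1)).card = 2 ^ r := by
    rw [Finset.card_product, Finset.card_univ, Fintype.card_bool, card_lists,
      mul_comm, ← pow_succ]
    congr 1
    omega
  rw [← hcard]
  set G : Bool × List Bool → TrVert r := fun bt =>
    if h : bt.2.length = r - 1 then
      (if bt.1 then ⟨bt.2, by constructor <;> omega⟩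
       else ⟨false :: bt.2, ⟨by simp; omega, fun _ => rfl⟩⟩)
    else root r hr with hG
  apply Finset.card_le_card_of_injOn G
  · rintro ⟨b, t⟩ hbt
    rw [Finset.mem_coe, Finset.mem_product] at hbt
    have ht : t.length = r - 1 := mem_lists.mp hbt.2
    rw [Finset.mem_coe, hD, Finset.mem_filter]
    refine ⟨Finset.mem_univ _, ?_⟩
    simp only [hG, dif_pos ht]
    cases b <;> simp [ht]
  · rintro ⟨b, t⟩ hbt ⟨b', t'⟩ hbt' hGeq
    rw [Finset.mem_coe, Finset.mem_product] at hbt hbt'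
    have ht : t.length = r - 1 := mem_lists.mp hbt.2
    have ht' : t'.length = r - 1 := mem_lists.mp hbt'.2
    simp only [hG, dif_pos ht, dif_pos ht'] at hGeq
    have hval := congrArg (fun v : TrVert r => (v : List Bool)) hGeq
    cases b <;> cases b' <;> simp only [if_pos, if_neg, Bool.false_eq_true,
      not_false_iff, if_true, if_false] at hval
    · simp at hval; simp [hval]
    · exfalso; have := congrArg List.length hval; simp at this; omega
    · exfalso; have := congrArg List.length hval; simp at this; omega
    · simp [hval]

end BurnAux

theorem burning_Tr (r : ℕ) (hr : 1 ≤ r) : burningNumber (Tr r) = r + 1 := by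
  classical
  have hmem : (r + 1) ∈ {k | ∃ x : Fin k → TrVert r, ∀ v : TrVert r,
      ∃ i : Fin k, v ∈ ball (Tr r) (x i) (k - 1 - (i : ℕ))} := by
    refine ⟨fun _ => BurnAux.root r hr, fun v => ⟨⟨0, by omega⟩, ?_⟩⟩
    constructor
    · exact BurnAux.tr_reachable hr _ v
    · obtain ⟨W, hW⟩ := BurnAux.exists_walk_to_root hr v
      have h1 : (Tr r).dist (BurnAux.root r hr) v ≤ (v : List Bool).length := by
        rw [SimpleGraph.dist_comm]
        exact le_trans (SimpleGraph.dist_le W) (le_of_eq hW)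
      have h2 := v.2.1
      simp only []
      omega
  apply le_antisymm
  · exact Nat.sInf_le hmem
  · apply le_csInf ⟨r + 1, hmem⟩
    rintro k ⟨x, hx⟩
    by_contra hk
    push_neg at hk
    have hkr : k ≤ r := by omega
    set D := Finset.univ.filter
      (fun v : TrVert r => r - 1 ≤ (v : List Bool).length) with hD
    have hDcard := BurnAux.deep_card hr
    rw [← hD] at hDcard
    set S : Fin k → Finset (TrVert r) := fun i =>
      D.filter (fun v => v ∈ ball (Tr r) (x i) (k - 1 - (i : ℕ))) with hS
    have hcover : D ⊆ Finset.univ.biUnion S := by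
      intro v hv
      obtain ⟨i, hi⟩ := hx v
      exact Finset.mem_biUnion.mpr ⟨i, Finset.mem_univ _,
        Finset.mem_filter.mpr ⟨hv, hi⟩⟩
    have h1 : D.card ≤ ∑ i : Fin k, (S i).card :=
      le_trans (Finset.card_le_card hcover) Finset.card_biUnion_le
    have h2 : ∀ i : Fin k, (S i).card ≤ 2 ^ (k - 1 - (i : ℕ)) := by
      intro i
      apply BurnAux.ball_card hr (x i) _ (by omega)
      intro v hv
      rw [hS, Finset.mem_filter, hD, Finset.mem_filter] at hv
      exact ⟨hv.1.2, hv.2⟩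
    have h3 : ∑ i : Fin k, (S i).card ≤ ∑ i : Fin k, 2 ^ (k - 1 - (i : ℕ)) :=
      Finset.sum_le_sum fun i _ => h2 i
    have h4 : ∑ i : Fin k, 2 ^ (k - 1 - (i : ℕ)) = 2 ^ k - 1 := by
      rw [Fin.sum_univ_eq_sum_range (fun i => 2 ^ (k - 1 - i)) k,
        Finset.sum_range_reflect (fun j => 2 ^ j) k, BurnAux.sum_two_pow]
    have h5 : (2 : ℕ) ^ k ≤ 2 ^ r := Nat.pow_le_pow_right (by omega) hkr
    have h6 : (1 : ℕ) ≤ 2 ^ k := Nat.one_le_two_pow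
    omega
end

section
/- Let r ≥ 1 be an integer and let T be a binary tree of depth r (a rooted tree of height r in which every vertex has at most two children). If T has a leaf of depth less than r, or T has a vertex of depth less than r−1 with exactly one child, then b(T) ≤ r. -/
section Aux

open SimpleGraph

variable {V : Type*} {T : SimpleGraph V}

lemma aux_first_step (hc : T.Connected) {a u : V} {n : ℕ} (h : T.dist a u = n + 1) :
    ∃ b, T.Adj a b ∧ T.dist b u = n := by
  obtain ⟨p, hpath, hlen⟩ := (hc.preconnected a u).exists_path_of_dist
  cases p with
  | nil => rw [h] at hlen; simp at hlen
  | @cons _ b _ hadj q =>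
    refine ⟨b, hadj, ?_⟩
    rw [h, Walk.length_cons] at hlen
    have h1 : T.dist b u ≤ n := by
      have := SimpleGraph.dist_le q; omega
    have h2 : T.dist a u ≤ T.dist a b + T.dist b u := hc.dist_triangle
    have h3 : T.dist a b = 1 := SimpleGraph.dist_eq_one_iff_adj.mpr hadj
    omega

lemma aux_adj_level (hT : T.IsTree) (root : V) {a b : V} (hab : T.Adj a b) :
    T.dist root b = T.dist root a + 1 ∨ T.dist root a = T.dist root b + 1 := by
  have hc := hT.isConnected
  have key : ∀ x y : V, T.Adj x y → T.dist root x = T.dist root y → False := by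
    intro x y hxy heq
    obtain ⟨P, hP, hPl⟩ := (hc.preconnected root x).exists_path_of_dist
    obtain ⟨Q, hQ, hQl⟩ := (hc.preconnected root y).exists_path_of_dist
    have hxQ : x ∉ Q.support := by
      intro hx
      obtain ⟨q, r', hqr⟩ := Walk.mem_support_iff_exists_append.mp hx
      have h1 : T.dist root x ≤ q.length := SimpleGraph.dist_le q
      have h2 : q.length + r'.length = Q.length := by
        rw [hqr]; exact (Walk.length_append q r').symm
      have h3 : r'.length = 0 := by omega
      exact hxy.ne (Walk.eq_of_length_eq_zero h3)
    have hP2 : (Walk.cons hxy Q.reverse).IsPath := by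
      rw [Walk.cons_isPath_iff]
      exact ⟨hQ.reverse, by simpa [Walk.support_reverse] using hxQ⟩
    have huniq := isAcyclic_iff_path_unique.mp hT.IsAcyclic
      ⟨P.reverse, hP.reverse⟩ ⟨Walk.cons hxy Q.reverse, hP2⟩
    have hlen : P.reverse.length = (Walk.cons hxy Q.reverse).length := by
      rw [Subtype.ext_iff] at huniq
      exact congrArg Walk.length huniq
    rw [Walk.length_reverse, Walk.length_cons, Walk.length_reverse] at hlen
    omega
  have d1 : T.dist root a ≤ T.dist root b + 1 := by
    have := hc.dist_triangle (u := root) (v := b) (w := a)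
    have h3 : T.dist b a = 1 := SimpleGraph.dist_eq_one_iff_adj.mpr hab.symm
    omega
  have d2 : T.dist root b ≤ T.dist root a + 1 := by
    have := hc.dist_triangle (u := root) (v := a) (w := b)
    have h3 : T.dist a b = 1 := SimpleGraph.dist_eq_one_iff_adj.mpr hab
    omega
  have hne : T.dist root a ≠ T.dist root b := fun h => key a b hab h
  omega

lemma aux_dist_getVert_le (hc : T.Connected) {a c : V} (W : T.Walk a c) (i : ℕ) :
    T.dist a (W.getVert i) ≤ i := by
  induction i with
  | zero => simp [Walk.getVert_zero]
  | succ n ih =>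
    by_cases hn : n < W.length
    · have hadj := W.adj_getVert_succ hn
      have h1 := hc.dist_triangle (u := a) (v := W.getVert n) (w := W.getVert (n+1))
      have h3 : T.dist (W.getVert n) (W.getVert (n+1)) = 1 :=
        SimpleGraph.dist_eq_one_iff_adj.mpr hadj
      omega
    · rw [W.getVert_of_length_le (by omega), ← W.getVert_of_length_le (le_of_not_gt hn)]
      omega

lemma aux_getVert_dist (hc : T.Connected) {a c : V} (W : T.Walk a c)
    (hW : W.length = T.dist a c) {i : ℕ} (hi : i ≤ W.length) :
    T.dist a (W.getVert i) = i := by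
  have h1 : T.dist a (W.getVert i) ≤ i := aux_dist_getVert_le hc W i
  have h2 : T.dist c (W.getVert i) ≤ W.length - i := by
    have := aux_dist_getVert_le hc W.reverse (W.length - i)
    rwa [Walk.getVert_reverse, Nat.sub_sub_self hi] at this
  have h3 : T.dist a c ≤ T.dist a (W.getVert i) + T.dist (W.getVert i) c :=
    hc.dist_triangle
  rw [SimpleGraph.dist_comm (u := c)] at h2
  omega

lemma aux_cover [Fintype V] (hT : T.IsTree) (root : V) (r : ℕ)
    (hdepth : ∀ u : V, T.dist root u ≤ r)
    (hbin : ∀ w : V, {u : V | T.Adj w u ∧ T.dist root u = T.dist root w + 1}.ncard ≤ 2)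
    (v y : V) (hm1 : T.dist root v + 1 ≤ r)
    (hy : ∀ b, T.Adj v b → T.dist root b = T.dist root v + 1 → b = y)
    (hyv : T.dist y v ≤ r - 1 - T.dist root v) :
    ∃ x : Fin r → V, ∀ u : V, ∃ i : Fin r, u ∈ _root_.ball T (x i) (r - 1 - (i : ℕ)) := by
  classical
  have hc := hT.isConnected
  obtain ⟨W, hWp, hWl⟩ := (hc.preconnected root v).exists_path_of_dist
  set m := T.dist root v with hm
  have hWm : W.length = m := hWl
  have hgv : ∀ i, i ≤ m → T.dist root (W.getVert i) = i := by
    intro i hi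
    exact aux_getVert_dist hc W hWl (by omega)
  have hgvm : W.getVert m = v := by
    rw [← hWm]; exact W.getVert_length
  set S : ℕ → Set V := fun i =>
    {u : V | T.Adj (W.getVert i) u ∧ T.dist root u = i + 1} \ {W.getVert (i+1)} with hSdef
  set X : ℕ → V := fun i => if i < m then
      (if hs : (S i).Nonempty then hs.some else W.getVert i)
    else if i = m then y else root with hXdef
  refine ⟨fun i => X (i : ℕ), fun u => ?_⟩
  have hk : T.dist root u ≤ r := hdepth u
  set k := T.dist root u with hkdef
  set P : ℕ → Prop := fun j => j + T.dist (W.getVert j) u = k with hPdef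
  have hP0 : P 0 := by
    show 0 + T.dist (W.getVert 0) u = k
    rw [Walk.getVert_zero]
    omega
  have hPj : P (Nat.findGreatest P m) := Nat.findGreatest_spec (Nat.zero_le m) hP0
  set j := Nat.findGreatest P m with hjdef
  have hjm : j ≤ m := Nat.findGreatest_le m
  have hjr : j < r := by omega
  have hmr : m < r := by omega
  have hgvj : T.dist root (W.getVert j) = j := hgv j hjm
  have hPj' : j + T.dist (W.getVert j) u = k := hPj
  rcases Nat.eq_zero_or_pos (T.dist (W.getVert j) u) with hn0 | hpos
  · -- u = W.getVert j
    have hu : W.getVert j = u := hc.dist_eq_zero_iff.mp hn0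
    by_cases hjltm : j < m
    · refine ⟨⟨j, hjr⟩, ?_⟩
      show u ∈ _root_.ball T (X j) (r - 1 - j)
      refine ⟨hc.preconnected _ u, ?_⟩
      by_cases hs : (S j).Nonempty
      · have hXj : X j = hs.some := by
          show (if j < m then _ else _) = _
          rw [if_pos hjltm, dif_pos hs]
        have hmem := hs.some_mem
        have hadj : T.Adj (W.getVert j) hs.some := hmem.1.1
        have hd1 : T.dist hs.some u ≤ 1 := by
          rw [← hu, SimpleGraph.dist_comm]
          exact le_of_eq (SimpleGraph.dist_eq_one_iff_adj.mpr hadj)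
        rw [hXj]
        omega
      · have hXj : X j = W.getVert j := by
          show (if j < m then _ else _) = _
          rw [if_pos hjltm, dif_neg hs]
        rw [hXj, hu]
        simp only [SimpleGraph.dist_self]
        omega
    · have hjem : j = m := by omega
      refine ⟨⟨m, hmr⟩, ?_⟩
      show u ∈ _root_.ball T (X m) (r - 1 - m)
      refine ⟨hc.preconnected _ u, ?_⟩
      have hXm : X m = y := by
        show (if m < m then _ else _) = _
        rw [if_neg (lt_irrefl m), if_pos rfl]
      have huv : u = v := by rw [← hu, hjem, hgvm]
      rw [hXm, huv, SimpleGraph.dist_comm]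
      rw [SimpleGraph.dist_comm] at hyv
      exact hyv
  · obtain ⟨n, hn⟩ : ∃ n, T.dist (W.getVert j) u = n + 1 :=
      ⟨T.dist (W.getVert j) u - 1, by omega⟩
    obtain ⟨b, hba, hbd⟩ := aux_first_step hc hn
    have hlev := aux_adj_level hT root hba
    rw [hgvj] at hlev
    have hkb : k ≤ T.dist root b + T.dist b u := hc.dist_triangle
    have hbl : T.dist root b = j + 1 := by
      rcases hlev with h' | h'
      · exact h'
      · omega
    by_cases hjltm : j < m
    · have hb_ne : b ≠ W.getVert (j+1) := by
        intro he
        have hp1 : P (j+1) := by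
          show (j+1) + T.dist (W.getVert (j+1)) u = k
          rw [← he]
          omega
        exact Nat.findGreatest_is_greatest (P := P) (n := m) (k := j+1)
          (by omega) (by omega) hp1
      have hbS : b ∈ S j := ⟨⟨hba, hbl⟩, hb_ne⟩
      have hs : (S j).Nonempty := ⟨b, hbS⟩
      refine ⟨⟨j, hjr⟩, ?_⟩
      show u ∈ _root_.ball T (X j) (r - 1 - j)
      refine ⟨hc.preconnected _ u, ?_⟩
      have hXj : X j = hs.some := by
        show (if j < m then _ else _) = _
        rw [if_pos hjltm, dif_pos hs]
      have hsmem := hs.some_mem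
      have heq : hs.some = b := by
        by_contra hne
        set C := {u : V | T.Adj (W.getVert j) u ∧
          T.dist root u = T.dist root (W.getVert j) + 1} with hCdef
      -- three distinct elements of C
        have hnextC : W.getVert (j+1) ∈ C := by
          refine ⟨W.adj_getVert_succ (by omega), ?_⟩
          rw [hgvj, hgv (j+1) (by omega)]
        have hbC : b ∈ C := by
          refine ⟨hba, ?_⟩
          rw [hgvj, hbl]
        have hsC : hs.some ∈ C := by
          refine ⟨hsmem.1.1, ?_⟩
          rw [hgvj]
          exact hsmem.1.2
        have hs_ne : hs.some ≠ W.getVert (j+1) := by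
          intro he
          exact hsmem.2 he
        have hsub : ({hs.some, b, W.getVert (j+1)} : Set V) ⊆ C := by
          intro z hz
          rcases hz with hz | hz | hz
          · rw [hz]; exact hsC
          · rw [hz]; exact hbC
          · rw [hz]; exact hnextC
        have h3 : ({hs.some, b, W.getVert (j+1)} : Set V).ncard = 3 := by
          rw [Set.ncard_insert_of_notMem (by simp [hne, hs_ne]) (Set.toFinite _),
            Set.ncard_pair hb_ne]
        have hle := Set.ncard_le_ncard hsub (Set.toFinite C)
        have hC2 := hbin (W.getVert j)
        rw [← hCdef] at hC2
        omega
      rw [hXj, heq]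
      omega
    · have hjem : j = m := by omega
      have hbvadj : T.Adj v b := by rw [← hgvm, ← hjem]; exact hba
      have hbv : b = y := hy b hbvadj (by omega)
      refine ⟨⟨m, hmr⟩, ?_⟩
      show u ∈ _root_.ball T (X m) (r - 1 - m)
      refine ⟨hc.preconnected _ u, ?_⟩
      have hXm : X m = y := by
        show (if m < m then _ else _) = _
        rw [if_neg (lt_irrefl m), if_pos rfl]
      rw [hXm, ← hbv]
      omega

end Aux

theorem burning_le_of_defective_binary_tree {V : Type*} [Fintype V]
    (T : SimpleGraph V) (root : V) (hT : T.IsTree) (r : ℕ) (hr : 1 ≤ r)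
    (hdepth : ∀ v : V, T.dist root v ≤ r) (hmax : ∃ v : V, T.dist root v = r)
    (hbin : ∀ v : V, {u : V | T.Adj v u ∧ T.dist root u = T.dist root v + 1}.ncard ≤ 2)
    (h : (∃ v : V, T.dist root v < r ∧
            {u : V | T.Adj v u ∧ T.dist root u = T.dist root v + 1} = ∅) ∨
         (∃ v : V, T.dist root v < r - 1 ∧
            {u : V | T.Adj v u ∧ T.dist root u = T.dist root v + 1}.ncard = 1)) :
    burningNumber T ≤ r := by
  have key : ∃ x : Fin r → V, ∀ u : V, ∃ i : Fin r, u ∈ ball T (x i) (r - 1 - (i : ℕ)) := by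
    rcases h with ⟨v, hvr, hemp⟩ | ⟨v, hvr, hcard⟩
    · refine aux_cover hT root r hdepth hbin v v (by omega) ?_ ?_
      · intro b hadj hdist
        have : b ∈ ({u : V | T.Adj v u ∧ T.dist root u = T.dist root v + 1}) := ⟨hadj, hdist⟩
        rw [hemp] at this
        exact absurd this (Set.notMem_empty b)
      · simp [SimpleGraph.dist_self]
    · obtain ⟨y, hyeq⟩ := Set.ncard_eq_one.mp hcard
      have hymem : y ∈ {u : V | T.Adj v u ∧ T.dist root u = T.dist root v + 1} := by
        rw [hyeq]; rfl
      refine aux_cover hT root r hdepth hbin v y (by omega) ?_ ?_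
      · intro b hadj hdist
        have : b ∈ {u : V | T.Adj v u ∧ T.dist root u = T.dist root v + 1} := ⟨hadj, hdist⟩
        rw [hyeq] at this
        exact this
      · have h1 : T.dist y v = 1 := by
          rw [SimpleGraph.dist_comm]
          exact SimpleGraph.dist_eq_one_iff_adj.mpr hymem.1
        omega
  exact Nat.sInf_le key
end
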